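/- The intertwining sequence of the factor 101 in the Thue-Morse word is (ABBA)^ω: listing in increasing order all positions where 101 or 010 occurs, the sequence of labels (A for 101, B for 010) is the periodic sequence ABBAABBAABBA.... -/
import Mathlib


open scoped Classical

/-- The Thue-Morse word: parity of the binary digit sum. -/
def tm (n : ℕ) : ℕ := (Nat.digits 2 n).sum % 2

/-- `t[j..j+n-1] = t[i..i+n-1]` : an occurrence at `j` of the factor `t[i..i+n-1]`. -/
def feq (i j n : ℕ) : Prop := ∀ k < n, tm (j + k) = tm (i + k)

/-- `t[j..j+n-1]` is the binary complement of `t[i..i+n-1]`. -/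
def feqc (i j n : ℕ) : Prop := ∀ k < n, tm (j + k) = 1 - tm (i + k)

/-- Positions of occurrences of `x = t[i..i+n-1]` or its complement. -/
def occSet (i n : ℕ) : ℕ → Prop := fun j => feq i j n ∨ feqc i j n

/-- The intertwining sequence of `x = t[i..i+n-1]`: at index `m`, the label of the
`m`-th (in increasing order of position) occurrence of `x` or its complement;
`0` codes `A` (an occurrence of `x`), `1` codes `B` (an occurrence of the complement). -/
noncomputable def itw (i n m : ℕ) : ℕ :=
  if feq i (Nat.nth (occSet i n) m) n then 0 else 1

/-- The intertwining sequence is `(AB)^ω`. -/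
def ABpat (i n : ℕ) : Prop := ∀ m, itw i n m = m % 2

/-- The intertwining sequence is `(BA)^ω`. -/
def BApat (i n : ℕ) : Prop := ∀ m, itw i n m = (m + 1) % 2

/-- The intertwining sequence is `(ABBA)^ω`. -/
def ABBApat (i n : ℕ) : Prop :=
  ∀ m, itw i n m = if m % 4 = 0 ∨ m % 4 = 3 then 0 else 1

/-- The intertwining sequence is `(BAAB)^ω`. -/
def BAABpat (i n : ℕ) : Prop :=
  ∀ m, itw i n m = if m % 4 = 0 ∨ m % 4 = 3 then 1 else 0

/-- The length-`n` factor of the Thue-Morse word starting at position `i`, as a word. -/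
def fac (i n : ℕ) : List ℕ := (List.range n).map (fun k => tm (i + k))

lemma tm_lt_two (n : ℕ) : tm n < 2 := Nat.mod_lt _ (by norm_num)

lemma tm_even (n : ℕ) : tm (2 * n) = tm n := by
  rcases Nat.eq_zero_or_pos n with h | h
  · simp [h]
  · rw [tm, tm, Nat.digits_def' (b := 2) (by norm_num) (by omega)]
    simp [Nat.mul_div_cancel_left, Nat.mul_mod_right]

lemma tm_odd (n : ℕ) : tm (2 * n + 1) = 1 - tm n := by
  rw [tm, tm, Nat.digits_def' (b := 2) (by norm_num) (by omega)]
  have h1 : (2 * n + 1) % 2 = 1 := by omega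
  have h2 : (2 * n + 1) / 2 = n := by omega
  rw [h1, h2, List.sum_cons]
  omega

lemma tm4_0 (n : ℕ) : tm (4 * n) = tm n := by
  have h : 4 * n = 2 * (2 * n) := by ring
  rw [h, tm_even, tm_even]

lemma tm4_1 (n : ℕ) : tm (4 * n + 1) = 1 - tm n := by
  have h : 4 * n + 1 = 2 * (2 * n) + 1 := by ring
  rw [h, tm_odd, tm_even]

lemma tm4_2 (n : ℕ) : tm (4 * n + 2) = 1 - tm n := by
  have h : 4 * n + 2 = 2 * (2 * n + 1) := by ring
  rw [h, tm_even, tm_odd]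

lemma tm4_3 (n : ℕ) : tm (4 * n + 3) = tm n := by
  have h : 4 * n + 3 = 2 * (2 * n + 1) + 1 := by ring
  have := tm_lt_two n
  rw [h, tm_odd, tm_odd]; omega

lemma tm0 : tm 0 = 0 := by simp [tm]

lemma tm1 : tm 1 = 1 := by
  have h := tm_odd 0; rw [tm0] at h; simpa using h

lemma tm2 : tm 2 = 1 := by
  have h := tm_even 1; rw [tm1] at h; simpa using h

lemma tm3 : tm 3 = 0 := by
  have h := tm4_3 0; rw [tm0] at h; simpa using h

lemma tm4 : tm 4 = 1 := by
  have h := tm4_0 1; rw [tm1] at h; simpa using h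

/-- the "flip" set -/
def Tf : ℕ → Prop := fun n => tm n ≠ tm (n + 1)

lemma occ_iff_alt (j : ℕ) :
    occSet 2 3 j ↔ (tm j ≠ tm (j + 1) ∧ tm (j + 1) ≠ tm (j + 2)) := by
  have h0 := tm_lt_two j
  have h1 := tm_lt_two (j + 1)
  have h2 := tm_lt_two (j + 2)
  constructor
  · rintro (h | h) <;>
    · have e0 := h 0 (by norm_num)
      have e1 := h 1 (by norm_num)
      have e2 := h 2 (by norm_num)
      norm_num [tm2, tm3, tm4] at e0 e1 e2
      constructor <;> omega
  · rintro ⟨a, b⟩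
    rcases (by omega : tm j = 0 ∨ tm j = 1) with hj | hj
    · right; intro k hk
      interval_cases k <;>
        simp only [Nat.add_zero, show (2:ℕ)+1 = 3 by norm_num,
          show (2:ℕ)+2 = 4 by norm_num, tm2, tm3, tm4] <;> omega
    · left; intro k hk
      interval_cases k <;>
        simp only [Nat.add_zero, show (2:ℕ)+1 = 3 by norm_num,
          show (2:ℕ)+2 = 4 by norm_num, tm2, tm3, tm4] <;> omega

lemma occ_iff (j : ℕ) :
    occSet 2 3 j ↔ ∃ n, Tf n ∧ (j = 4 * n + 2 ∨ j = 4 * n + 3) := by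
  rw [occ_iff_alt]
  constructor
  · rintro ⟨a, b⟩
    have hj4 : j = 4 * (j / 4) + j % 4 := by omega
    set n := j / 4 with hn
    rcases (by omega : j % 4 = 0 ∨ j % 4 = 1 ∨ j % 4 = 2 ∨ j % 4 = 3) with h | h | h | h <;>
      rw [h] at hj4
    · exfalso
      rw [hj4, show 4*n+0 = 4*n by ring] at b
      rw [show 4*n+1+1 = 4*n+2 by ring] at b
      rw [tm4_1, tm4_2] at b
      exact b rfl
    · exfalso
      rw [hj4, show 4*n+1+1 = 4*n+2 by ring] at a
      rw [tm4_1, tm4_2] at a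
      exact a rfl
    · refine ⟨n, ?_, Or.inl hj4⟩
      rw [hj4, show 4*n+2+1 = 4*n+3 by ring, show 4*n+2+2 = 4*(n+1) by ring,
        tm4_3, tm4_0] at b
      exact b
    · refine ⟨n, ?_, Or.inr hj4⟩
      rw [hj4, show 4*n+3+1 = 4*(n+1) by ring, tm4_3, tm4_0] at a
      exact a
  · rintro ⟨n, hT, hj | hj⟩ <;> subst hj
    · rw [show 4*n+2+1 = 4*n+3 by ring, show 4*n+2+2 = 4*(n+1) by ring,
        tm4_2, tm4_3, tm4_0]
      have := tm_lt_two n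
      exact ⟨by omega, hT⟩
    · rw [show 4*n+3+1 = 4*(n+1) by ring, show 4*n+3+2 = 4*(n+1)+1 by ring,
        tm4_3, tm4_0, tm4_1]
      have := tm_lt_two (n + 1)
      exact ⟨hT, by omega⟩

lemma Tf_infinite : {n | Tf n}.Infinite := by
  apply Set.infinite_of_injective_forall_mem (f := fun n : ℕ => 2 * n)
    (hi := fun a b hab => by simp only at hab; omega)
  intro n
  have h1 := tm_even n
  have h2 := tm_odd n
  have h3 := tm_lt_two n
  simp only [Set.mem_setOf_eq, Tf]
  omega

lemma Tf_nth_mem (k : ℕ) : Tf (Nat.nth Tf k) :=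
  Nat.nth_mem_of_infinite Tf_infinite k

lemma Tf_nth_zero : Nat.nth Tf 0 = 0 := by
  apply Nat.nth_zero_of_zero
  show tm 0 ≠ tm 1
  rw [tm0, tm1]; omega

lemma Tf_next {k n : ℕ} (hn : Tf n) (h : Nat.nth Tf k < n) :
    Nat.nth Tf (k + 1) ≤ n := by
  by_contra hc
  push_neg at hc
  exact absurd (Nat.le_nth_of_lt_nth_succ hc hn) (by omega)

lemma tm_nth_succ (k : ℕ) :
    tm (Nat.nth Tf (k + 1)) = 1 - tm (Nat.nth Tf k) := by
  have hlt : Nat.nth Tf k < Nat.nth Tf (k + 1) :=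
    (Nat.nth_lt_nth Tf_infinite).mpr k.lt_succ_self
  have claim : ∀ j, Nat.nth Tf k + 1 ≤ j → j ≤ Nat.nth Tf (k + 1) →
      tm j = tm (Nat.nth Tf k + 1) := by
    intro j hj
    induction j, hj using Nat.le_induction with
    | base => intro _; rfl
    | succ j hj ih =>
      intro hle
      have hjlt : j < Nat.nth Tf (k + 1) := by omega
      have hnT : ¬ Tf j := fun hT =>
        absurd (Nat.le_nth_of_lt_nth_succ hjlt hT) (by omega)
      have heq : tm j = tm (j + 1) := not_ne_iff.mp hnT
      rw [← heq]
      exact ih (by omega)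
  have h1 := claim _ hlt le_rfl
  have h2 : tm (Nat.nth Tf k) ≠ tm (Nat.nth Tf k + 1) := Tf_nth_mem k
  have h3 := tm_lt_two (Nat.nth Tf k)
  have h4 := tm_lt_two (Nat.nth Tf k + 1)
  omega

lemma tm_nth (k : ℕ) : tm (Nat.nth Tf k) = k % 2 := by
  induction k with
  | zero => rw [Tf_nth_zero, tm0]
  | succ k ih => rw [tm_nth_succ, ih]; omega

/-- explicit enumeration of the occurrence set -/
noncomputable def g (m : ℕ) : ℕ := 4 * Nat.nth Tf (m / 2) + 2 + m % 2

lemma occ_g (m : ℕ) : occSet 2 3 (g m) := by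
  rw [occ_iff]
  exact ⟨Nat.nth Tf (m / 2), Tf_nth_mem _, by rcases (by omega : m % 2 = 0 ∨ m % 2 = 1) with h | h <;> [left; right] <;> simp [g, h]⟩

lemma g_lt_succ (m : ℕ) : g m < g (m + 1) := by
  rcases (by omega : m % 2 = 0 ∨ m % 2 = 1) with h | h
  · have : (m + 1) / 2 = m / 2 := by omega
    simp [g, h, this]; omega
  · have h2 : (m + 1) / 2 = m / 2 + 1 := by omega
    have hlt : Nat.nth Tf (m / 2) < Nat.nth Tf (m / 2 + 1) :=
      (Nat.nth_lt_nth Tf_infinite).mpr (Nat.lt_succ_self _)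
    simp only [g, h, h2]
    omega

lemma g_mono : StrictMono g := strictMono_nat_of_lt_succ g_lt_succ

lemma g_min (m : ℕ) {x : ℕ} (hx : occSet 2 3 x) (h : ∀ k < m, g k < x) :
    g m ≤ x := by
  rw [occ_iff] at hx
  obtain ⟨n, hT, hc⟩ := hx
  rcases m with _ | m
  · -- g 0 = 2
    simp only [g, Nat.zero_div, Tf_nth_zero]
    omega
  · have hgm : g m < x := h m (Nat.lt_succ_self m)
    rcases (by omega : m % 2 = 0 ∨ m % 2 = 1) with hp | hp
    · -- g (m+1) = g m + 1
      have : (m + 1) / 2 = m / 2 := by omega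
      simp only [g, this] at *
      omega
    · -- m odd : g (m+1) = 4 * nth Tf (m/2+1) + 2
      have h2 : (m + 1) / 2 = m / 2 + 1 := by omega
      have hgt : Nat.nth Tf (m / 2) < n := by
        simp only [g, hp] at hgm
        omega
      have hnext := Tf_next hT hgt
      simp only [g, h2]
      omega

lemma nth_occ (m : ℕ) : Nat.nth (occSet 2 3) m = g m := by
  induction m using Nat.strong_induction_on with
  | _ m ih =>
    rw [Nat.nth_eq_sInf]
    have hmem : g m ∈ {x | occSet 2 3 x ∧ ∀ k < m, Nat.nth (occSet 2 3) k < x} :=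
      ⟨occ_g m, fun k hk => by rw [ih k hk]; exact g_mono hk⟩
    apply le_antisymm
    · exact Nat.sInf_le hmem
    · apply le_csInf ⟨g m, hmem⟩
      rintro x ⟨hx, hlt⟩
      exact g_min m hx (fun k hk => (ih k hk) ▸ hlt k hk)

/-- The intertwining sequence of the factor 101 = t[2..4] is (ABBA)^ω. -/
theorem tm_itw_101 : ABBApat 2 3 := by
  intro m
  have hocc := occ_g m
  have htm : tm (g m) = if m % 4 = 0 ∨ m % 4 = 3 then 1 else 0 := by
    have hk := tm_nth (m / 2)
    rcases (by omega : m % 2 = 0 ∨ m % 2 = 1) with hp | hp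
    · have : g m = 4 * Nat.nth Tf (m / 2) + 2 := by simp [g, hp]
      rw [this, tm4_2, hk]
      split_ifs with h <;> omega
    · have : g m = 4 * Nat.nth Tf (m / 2) + 3 := by simp [g, hp]
      rw [this, tm4_3, hk]
      split_ifs with h <;> omega
  rw [itw, nth_occ]
  rcases hocc with h | h
  · have e0 := h 0 (by norm_num)
    simp only [Nat.add_zero] at e0
    rw [tm2] at e0
    rw [if_pos h]
    split_ifs at htm ⊢ <;> omega
  · have e0 := h 0 (by norm_num)
    simp only [Nat.add_zero] at e0
    rw [tm2] at e0
    have hne : ¬ feq 2 (g m) 3 := by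
      intro hf
      have e0' := hf 0 (by norm_num)
      simp only [Nat.add_zero] at e0'
      rw [tm2] at e0'
      omega
    rw [if_neg hne]
    split_ifs at htm ⊢ <;> omega
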